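/- In any swap equilibrium of a 2-type Swap Schelling Game with o > 1 minority agents, the social welfare (sum of all agents' utilities) is at least o − 1. -/

import Mathlib

open SimpleGraph Finset
open scoped Classical

noncomputable def ssgUtil {V A : Type*} [Fintype V] [DecidableEq V]
    (G : SimpleGraph V) [DecidableRel G.Adj]
    {k : ℕ} (c : A → Fin k) (σ : A ≃ V) (i : A) : ℚ :=
  (((G.neighborFinset (σ i)).filter (fun v => c (σ.symm v) = c i)).card : ℚ) /
    (G.degree (σ i) : ℚ)

def ssgSwap {V A : Type*} [DecidableEq V] (σ : A ≃ V) (i j : A) : A ≃ V :=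
  σ.trans (Equiv.swap (σ i) (σ j))

def ssgProfitable {V A : Type*} [Fintype V] [DecidableEq V]
    (G : SimpleGraph V) [DecidableRel G.Adj]
    {k : ℕ} (c : A → Fin k) (σ : A ≃ V) (i j : A) : Prop :=
  c i ≠ c j ∧
    ssgUtil G c σ i < ssgUtil G c (ssgSwap σ i j) i ∧
    ssgUtil G c σ j < ssgUtil G c (ssgSwap σ i j) j

def ssgEquilibrium {V A : Type*} [Fintype V] [DecidableEq V]
    (G : SimpleGraph V) [DecidableRel G.Adj]
    {k : ℕ} (c : A → Fin k) (σ : A ≃ V) : Prop :=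
  ∀ i j : A, ¬ ssgProfitable G c σ i j

def ssgLocalEquilibrium {V A : Type*} [Fintype V] [DecidableEq V]
    (G : SimpleGraph V) [DecidableRel G.Adj]
    {k : ℕ} (c : A → Fin k) (σ : A ≃ V) : Prop :=
  ∀ i j : A, G.Adj (σ i) (σ j) → ¬ ssgProfitable G c σ i j

noncomputable def ssgWelfare {V A : Type*} [Fintype V] [DecidableEq V] [Fintype A]
    (G : SimpleGraph V) [DecidableRel G.Adj]
    {k : ℕ} (c : A → Fin k) (σ : A ≃ V) : ℚ :=
  ∑ i : A, ssgUtil G c σ i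

noncomputable def ssgPhi {V A : Type*} [Fintype V] [DecidableEq V]
    (G : SimpleGraph V) [DecidableRel G.Adj]
    {k : ℕ} (c : A → Fin k) (σ : A ≃ V) : ℕ :=
  (G.edgeFinset.filter (fun e => ∀ u ∈ e, ∀ v ∈ e, c (σ.symm u) = c (σ.symm v))).card

/-! ### Auxiliary lemmas -/

lemma fin2_dich {z w : Fin 2} (h : z ≠ w) (y : Fin 2) : (y = z ↔ ¬ y = w) := by
  revert h; revert y z w; decide

lemma ssg_deg_pos {V : Type*} [Fintype V] (G : SimpleGraph V) [DecidableRel G.Adj]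
    (hconn : G.Connected) (hV : 1 < Fintype.card V) (v : V) : 0 < G.degree v := by
  rw [G.degree_pos_iff_exists_adj v]
  obtain ⟨w, hw⟩ := Fintype.exists_ne_of_one_lt_card hV v
  obtain ⟨p⟩ := hconn.preconnected v w
  cases p with
  | nil => exact absurd rfl hw.symm
  | cons h _ => exact ⟨_, h⟩

lemma ssgUtil_nonneg {V A : Type*} [Fintype V] [DecidableEq V]
    (G : SimpleGraph V) [DecidableRel G.Adj] {k : ℕ} (c : A → Fin k) (σ : A ≃ V) (i : A) :
    0 ≤ ssgUtil G c σ i := by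
  unfold ssgUtil; positivity

lemma swapUtil_nonadj {V A : Type*} [Fintype V] [DecidableEq V]
    (G : SimpleGraph V) [DecidableRel G.Adj]
    (c : A → Fin 2) (σ : A ≃ V) (i j : A) (hij : c i ≠ c j)
    (hd : 0 < G.degree (σ j)) (hadj : ¬ G.Adj (σ i) (σ j)) :
    ssgUtil G c (ssgSwap σ i j) i = 1 - ssgUtil G c σ j := by
  have h1 : (ssgSwap σ i j) i = σ j := by
    simp [ssgSwap, Equiv.swap_apply_left]
  have h2 : ∀ v, (ssgSwap σ i j).symm v = σ.symm (Equiv.swap (σ i) (σ j) v) := by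
    intro v; simp [ssgSwap]
  have hfc : (G.neighborFinset (σ j)).filter
      (fun v => c ((ssgSwap σ i j).symm v) = c i)
      = (G.neighborFinset (σ j)).filter (fun v => ¬ c (σ.symm v) = c j) := by
    apply Finset.filter_congr
    intro v hv
    rw [mem_neighborFinset] at hv
    have hv1 : v ≠ σ i := fun h => hadj (h ▸ hv.symm)
    have hv2 : v ≠ σ j := hv.ne'
    rw [h2, Equiv.swap_apply_of_ne_of_ne hv1 hv2]
    exact fin2_dich hij _
  have hcards := Finset.card_filter_add_card_filter_not
      (s := G.neighborFinset (σ j)) (p := fun v => c (σ.symm v) = c j)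
  rw [card_neighborFinset_eq_degree] at hcards
  unfold ssgUtil
  rw [h1, hfc]
  have hdq : (0:ℚ) < (G.degree (σ j) : ℚ) := by exact_mod_cast hd
  rw [eq_sub_iff_add_eq, ← add_div, div_eq_one_iff_eq (ne_of_gt hdq)]
  push_cast [← hcards]
  ring

lemma swapUtil_adj {V A : Type*} [Fintype V] [DecidableEq V]
    (G : SimpleGraph V) [DecidableRel G.Adj]
    (c : A → Fin 2) (σ : A ≃ V) (i j : A) (hij : c i ≠ c j)
    (hadj : G.Adj (σ i) (σ j)) :
    ssgUtil G c (ssgSwap σ i j) i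
      = 1 - ssgUtil G c σ j - 1 / (G.degree (σ j) : ℚ) := by
  have h1 : (ssgSwap σ i j) i = σ j := by
    simp [ssgSwap, Equiv.swap_apply_left]
  have h2 : ∀ v, (ssgSwap σ i j).symm v = σ.symm (Equiv.swap (σ i) (σ j) v) := by
    intro v; simp [ssgSwap]
  have hmem : σ i ∈ (G.neighborFinset (σ j)).filter (fun v => ¬ c (σ.symm v) = c j) := by
    rw [Finset.mem_filter, mem_neighborFinset]
    exact ⟨hadj.symm, by simpa using hij⟩
  have hfc : (G.neighborFinset (σ j)).filter
      (fun v => c ((ssgSwap σ i j).symm v) = c i)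
      = ((G.neighborFinset (σ j)).filter (fun v => ¬ c (σ.symm v) = c j)).erase (σ i) := by
    ext v
    rw [Finset.mem_erase, Finset.mem_filter, Finset.mem_filter]
    constructor
    · rintro ⟨hv, hcv⟩
      by_cases hvi : v = σ i
      · exfalso
        rw [hvi, h2, Equiv.swap_apply_left, Equiv.symm_apply_apply] at hcv
        exact hij hcv.symm
      · have hv2 : v ≠ σ j := by
          rw [mem_neighborFinset] at hv; exact hv.ne'
        rw [h2, Equiv.swap_apply_of_ne_of_ne hvi hv2] at hcv
        exact ⟨hvi, hv, (fin2_dich hij _).mp hcv⟩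
    · rintro ⟨hvi, hv, hcv⟩
      have hv2 : v ≠ σ j := by
        rw [mem_neighborFinset] at hv; exact hv.ne'
      refine ⟨hv, ?_⟩
      rw [h2, Equiv.swap_apply_of_ne_of_ne hvi hv2]
      exact (fin2_dich hij _).mpr hcv
  have hcards := Finset.card_filter_add_card_filter_not
      (s := G.neighborFinset (σ j)) (p := fun v => c (σ.symm v) = c j)
  rw [card_neighborFinset_eq_degree] at hcards
  have herase : (((G.neighborFinset (σ j)).filter (fun v => ¬ c (σ.symm v) = c j)).erase (σ i)).card
      = ((G.neighborFinset (σ j)).filter (fun v => ¬ c (σ.symm v) = c j)).card - 1 :=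
    Finset.card_erase_of_mem hmem
  have hpos : 1 ≤ ((G.neighborFinset (σ j)).filter (fun v => ¬ c (σ.symm v) = c j)).card :=
    Finset.card_pos.mpr ⟨σ i, hmem⟩
  have hd : 0 < G.degree (σ j) := by
    rw [G.degree_pos_iff_exists_adj]; exact ⟨σ i, hadj.symm⟩
  have hdq : (0:ℚ) < (G.degree (σ j) : ℚ) := by exact_mod_cast hd
  have hc' : (((G.neighborFinset (σ j)).filter (fun v => c (σ.symm v) = c j)).card : ℚ)
      + (((G.neighborFinset (σ j)).filter (fun v => ¬ c (σ.symm v) = c j)).card : ℚ)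
      = (G.degree (σ j) : ℚ) := by exact_mod_cast hcards
  unfold ssgUtil
  rw [h1, hfc, herase, Nat.cast_sub hpos]
  field_simp
  linarith [hc', Nat.cast_one (R := ℚ)]

lemma ssgSwap_comm {V A : Type*} [DecidableEq V] (σ : A ≃ V) (i j : A) :
    ssgSwap σ i j = ssgSwap σ j i := by
  unfold ssgSwap; rw [Equiv.swap_comm]

lemma ssg_nonadj_sum {V A : Type*} [Fintype V] [DecidableEq V]
    (G : SimpleGraph V) [DecidableRel G.Adj]
    (c : A → Fin 2) (σ : A ≃ V) (heq : ssgEquilibrium G c σ) (i j : A)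
    (hij : c i ≠ c j) (hdi : 0 < G.degree (σ i)) (hdj : 0 < G.degree (σ j))
    (hadj : ¬ G.Adj (σ i) (σ j)) :
    1 ≤ ssgUtil G c σ i + ssgUtil G c σ j := by
  have h := heq i j
  rw [ssgProfitable] at h
  push_neg at h
  have hi' := swapUtil_nonadj G c σ i j hij hdj hadj
  have hj' := swapUtil_nonadj G c σ j i hij.symm hdi (fun h' => hadj h'.symm)
  rw [← ssgSwap_comm σ i j] at hj'
  rcases lt_or_ge (ssgUtil G c σ i) (ssgUtil G c (ssgSwap σ i j) i) with hlt | hle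
  · have := h hij hlt
    rw [hj'] at this; linarith
  · rw [hi'] at hle; linarith

lemma ssg_adj_sum {V A : Type*} [Fintype V] [DecidableEq V]
    (G : SimpleGraph V) [DecidableRel G.Adj]
    (c : A → Fin 2) (σ : A ≃ V) (heq : ssgEquilibrium G c σ) (i j : A)
    (hij : c i ≠ c j) (hadj : G.Adj (σ i) (σ j)) :
    1 - 1 / (G.degree (σ j) : ℚ) ≤ ssgUtil G c σ i + ssgUtil G c σ j ∨
    1 - 1 / (G.degree (σ i) : ℚ) ≤ ssgUtil G c σ i + ssgUtil G c σ j := by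
  have h := heq i j
  rw [ssgProfitable] at h
  push_neg at h
  have hi' := swapUtil_adj G c σ i j hij hadj
  have hj' := swapUtil_adj G c σ j i hij.symm hadj.symm
  rw [← ssgSwap_comm σ i j] at hj'
  rcases lt_or_ge (ssgUtil G c σ i) (ssgUtil G c (ssgSwap σ i j) i) with hlt | hle
  · have := h hij hlt
    rw [hj'] at this; right; linarith
  · rw [hi'] at hle; left; linarith

lemma ssg_card_adj {V A : Type*} [Fintype V] [DecidableEq V] [Fintype A]
    (G : SimpleGraph V) [DecidableRel G.Adj]
    (c : A → Fin 2) (σ : A ≃ V) (w : V) (t : Fin 2) :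
    ((Finset.univ.filter (fun i : A => c i = t)).filter (fun i => G.Adj w (σ i))).card
      = ((G.neighborFinset w).filter (fun v => c (σ.symm v) = t)).card := by
  apply Finset.card_nbij' (i := fun i => σ i) (j := fun v => σ.symm v)
  · intro i hi
    simp only [Finset.mem_coe, Finset.mem_filter, Finset.mem_univ, true_and, mem_neighborFinset] at hi ⊢
    exact ⟨hi.2, by simpa using hi.1⟩
  · intro v hv
    simp only [Finset.mem_coe, Finset.mem_filter, Finset.mem_univ, true_and, mem_neighborFinset] at hv ⊢
    exact ⟨by simpa using hv.2, by simpa using hv.1⟩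
  · intro i _; simp
  · intro v _; simp

lemma ssg_arith (o b p q a x al be : ℚ)
    (hb : o ≤ b) (hp : 1 ≤ p) (hq : 1 ≤ q)
    (ha1 : 1 ≤ a) (hab : a ≤ b) (hx1 : 1 ≤ x) (hxo : x ≤ o) (hxq : x ≤ q) (hap : a ≤ p)
    (hal : p * al = p - a) (hbe : q * be = q - x)
    (hs : al + be < 1)
    (hC : q * a + p * x ≤ p * q + p ∨ q * a + p * x ≤ p * q + q) :
    o - 1 ≤ (o - x) * (1 - be) + x * al + (b - a) * (1 - al) + a * be := by
  have hp0 : (0:ℚ) < p := by linarith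
  have hq0 : (0:ℚ) < q := by linarith
  have hpq : (0:ℚ) < p * q := mul_pos hp0 hq0
  have hT : p * q ≤ q * a + p * x := by nlinarith [hs, hal, hbe]
  have hP : p * q * (o - 1) ≤ p * x * (o - x) + a * q * (b - a) + p * q * (a + x) - a * x * (p + q) := by
    rcases hC with h1 | h2
    · rcases le_total x a with hax | hax
      · nlinarith [mul_nonneg (mul_nonneg (by linarith : (0:ℚ) ≤ b - o) hp0.le) (by linarith : (0:ℚ) ≤ q - x),
          mul_nonneg (by linarith : (0:ℚ) ≤ b - a) (by linarith : (0:ℚ) ≤ q*a + p*x - p*q),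
          mul_nonneg (by linarith : (0:ℚ) ≤ x) (by linarith : (0:ℚ) ≤ p*q + p - q*a - p*x),
          mul_nonneg hp0.le (by linarith : (0:ℚ) ≤ q - x)]
      · nlinarith [mul_nonneg (mul_nonneg (by linarith : (0:ℚ) ≤ b - o) hp0.le) (by linarith : (0:ℚ) ≤ q - x),
          mul_nonneg (by linarith : (0:ℚ) ≤ b - x) (by linarith : (0:ℚ) ≤ q*a + p*x - p*q),
          mul_nonneg (by linarith : (0:ℚ) ≤ a) (by linarith : (0:ℚ) ≤ p*q + p - q*a - p*x),
          mul_nonneg hp0.le (by linarith : (0:ℚ) ≤ q - a)]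
    · rcases le_total x a with hax | hax
      · nlinarith [mul_nonneg (mul_nonneg (by linarith : (0:ℚ) ≤ b - o) hp0.le) (by linarith : (0:ℚ) ≤ q - x),
          mul_nonneg (by linarith : (0:ℚ) ≤ b - a) (by linarith : (0:ℚ) ≤ q*a + p*x - p*q),
          mul_nonneg (by linarith : (0:ℚ) ≤ x) (by linarith : (0:ℚ) ≤ p*q + q - q*a - p*x),
          mul_nonneg hq0.le (by linarith : (0:ℚ) ≤ p - x)]
      · nlinarith [mul_nonneg (mul_nonneg (by linarith : (0:ℚ) ≤ b - o) hp0.le) (by linarith : (0:ℚ) ≤ q - x),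
          mul_nonneg (by linarith : (0:ℚ) ≤ b - x) (by linarith : (0:ℚ) ≤ q*a + p*x - p*q),
          mul_nonneg (by linarith : (0:ℚ) ≤ a) (by linarith : (0:ℚ) ≤ p*q + q - q*a - p*x),
          mul_nonneg hq0.le (by linarith : (0:ℚ) ≤ p - a)]
  rw [← mul_le_mul_iff_of_pos_right hpq]
  have hid : ((o - x) * (1 - be) + x * al + (b - a) * (1 - al) + a * be) * (p * q)
      = p * x * (o - x) + a * q * (b - a) + p * q * (a + x) - a * x * (p + q) := by
    linear_combination (q * (x - b + a)) * hal + (p * (a - o + x)) * hbe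
  rw [hid]
  linarith [hP]

set_option maxHeartbeats 1000000 in
theorem stmt7 {V A : Type*} [Fintype V] [DecidableEq V] [Fintype A]
    (G : SimpleGraph V) [DecidableRel G.Adj] (hconn : G.Connected)
    (c : A → Fin 2) (o n : ℕ)
    (ho : o = (Finset.univ.filter (fun i : A => c i = 0)).card)
    (hn : n = Fintype.card A)
    (ho1 : 1 < o) (hmin : o ≤ n - o)
    (σ : A ≃ V) (heq : ssgEquilibrium G c σ) :
    (o : ℚ) - 1 ≤ ssgWelfare G c σ := by
  classical
  set u : A → ℚ := ssgUtil G c σ with hu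
  set O : Finset A := Finset.univ.filter (fun i => c i = 0) with hOdef
  set B : Finset A := Finset.univ.filter (fun i => ¬ c i = 0) with hBdef
  have hcards : O.card + B.card = n := by
    rw [hn, ← Finset.card_univ (α := A)]
    exact Finset.card_filter_add_card_filter_not (s := Finset.univ) (p := fun i => c i = 0)
  have hoO : O.card = o := ho.symm
  have hon : o ≤ n := by omega
  have hob : o ≤ B.card := by omega
  have ho2 : 2 ≤ o := ho1
  have hV2 : 1 < Fintype.card V := by
    rw [← Fintype.card_congr σ, ← hn]; omega
  have hdeg : ∀ v, 0 < G.degree v := fun v => ssg_deg_pos G hconn hV2 v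
  have hOne : O.Nonempty := Finset.card_pos.mp (by omega)
  have hBne : B.Nonempty := Finset.card_pos.mp (by omega)
  obtain ⟨i0, hi0O, hi0min⟩ := O.exists_min_image u hOne
  obtain ⟨j0, hj0B, hj0min⟩ := B.exists_min_image u hBne
  have hci0 : c i0 = 0 := (Finset.mem_filter.mp hi0O).2
  have hcj0 : ¬ c j0 = 0 := (Finset.mem_filter.mp hj0B).2
  have hOc : ∀ i ∈ O, c i ≠ c j0 := by
    intro i hi h
    exact hcj0 (h ▸ (Finset.mem_filter.mp hi).2)
  have hBc : ∀ j ∈ B, c i0 ≠ c j := by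
    intro j hj h
    exact (Finset.mem_filter.mp hj).2 (h ▸ hci0)
  set al : ℚ := u i0 with hal_def
  set be : ℚ := u j0 with hbe_def
  have hal0 : 0 ≤ al := ssgUtil_nonneg G c σ i0
  have hbe0 : 0 ≤ be := ssgUtil_nonneg G c σ j0
  have hwelf : ssgWelfare G c σ = (∑ i ∈ O, u i) + ∑ i ∈ B, u i := by
    rw [ssgWelfare]
    exact (Finset.sum_filter_add_sum_filter_not Finset.univ (fun i => c i = 0) u).symm
  by_cases hs : 1 ≤ al + be
  · -- easy case : welfare at least o
    have h1 : (O.card : ℚ) * al ≤ ∑ i ∈ O, u i := by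
      simpa [nsmul_eq_mul] using Finset.card_nsmul_le_sum O u al (fun i hi => hi0min i hi)
    have h2 : (B.card : ℚ) * be ≤ ∑ i ∈ B, u i := by
      simpa [nsmul_eq_mul] using Finset.card_nsmul_le_sum B u be (fun i hi => hj0min i hi)
    have hobq : (o : ℚ) ≤ (B.card : ℚ) := by exact_mod_cast hob
    have hoq0 : (0:ℚ) ≤ (o:ℚ) := by positivity
    have hOq : (O.card : ℚ) = (o:ℚ) := by exact_mod_cast hoO
    rw [hwelf]
    rw [hOq] at h1
    nlinarith [mul_nonneg (by linarith : (0:ℚ) ≤ (B.card:ℚ) - o) hbe0,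
      mul_le_mul_of_nonneg_left hs hoq0]
  · push_neg at hs
    -- i0 and j0 must be adjacent
    have hij0 : c i0 ≠ c j0 := hOc i0 hi0O
    have hadj : G.Adj (σ i0) (σ j0) := by
      by_contra hnadj
      have := ssg_nonadj_sum G c σ heq i0 j0 hij0 (hdeg _) (hdeg _) hnadj
      linarith
    set p : ℕ := G.degree (σ i0) with hpdef
    set q : ℕ := G.degree (σ j0) with hqdef
    have hp1 : 1 ≤ p := hdeg _
    have hq1 : 1 ≤ q := hdeg _
    have hp0 : (0:ℚ) < (p:ℚ) := by exact_mod_cast hp1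
    have hq0 : (0:ℚ) < (q:ℚ) := by exact_mod_cast hq1
    -- counting: a = number of blue agents adjacent to σ i0
    set BA : Finset A := B.filter (fun j => G.Adj (σ i0) (σ j)) with hBAdef
    set OA : Finset A := O.filter (fun i => G.Adj (σ j0) (σ i)) with hOAdef
    set a : ℕ := BA.card with hadef
    set x : ℕ := OA.card with hxdef
    -- identify B with the color-1 filter
    have hBeq : B = Finset.univ.filter (fun i => c i = 1) := by
      ext i
      simp only [hBdef, Finset.mem_filter, Finset.mem_univ, true_and]
      exact (fin2_dich (by decide : (1:Fin 2) ≠ 0) (c i)).symm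
    have hacard : a = ((G.neighborFinset (σ i0)).filter (fun v => c (σ.symm v) = 1)).card := by
      rw [hadef, hBAdef, hBeq]
      exact ssg_card_adj G c σ (σ i0) 1
    have hxcard : x = ((G.neighborFinset (σ j0)).filter (fun v => c (σ.symm v) = 0)).card := by
      rw [hxdef, hOAdef, hOdef]
      exact ssg_card_adj G c σ (σ j0) 0
    -- mono counts
    have hmono_i : ((G.neighborFinset (σ i0)).filter (fun v => c (σ.symm v) = c i0)).card + a = p := by
      rw [hacard, hpdef, ← card_neighborFinset_eq_degree]
      have : (G.neighborFinset (σ i0)).filter (fun v => c (σ.symm v) = 1)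
          = (G.neighborFinset (σ i0)).filter (fun v => ¬ c (σ.symm v) = c i0) := by
        apply Finset.filter_congr
        intro v _
        rw [hci0]
        exact fin2_dich (by decide : (1:Fin 2) ≠ 0) _
      rw [this]
      exact Finset.card_filter_add_card_filter_not (p := fun v => c (σ.symm v) = c i0)
    have hmono_j : ((G.neighborFinset (σ j0)).filter (fun v => c (σ.symm v) = c j0)).card + x = q := by
      rw [hxcard, hqdef, ← card_neighborFinset_eq_degree]
      have hc1 : c j0 = 1 := by
        rcases (by decide : ∀ y : Fin 2, y = 0 ∨ y = 1) (c j0) with h | h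
        · exact absurd h hcj0
        · exact h
      have : (G.neighborFinset (σ j0)).filter (fun v => c (σ.symm v) = 0)
          = (G.neighborFinset (σ j0)).filter (fun v => ¬ c (σ.symm v) = c j0) := by
        apply Finset.filter_congr
        intro v _
        rw [hc1]
        exact fin2_dich (by decide : (0:Fin 2) ≠ 1) _
      rw [this]
      exact Finset.card_filter_add_card_filter_not (p := fun v => c (σ.symm v) = c j0)
    -- utility equations
    have hal_eq : (p:ℚ) * al = (p:ℚ) - a := by
      have : al = (((G.neighborFinset (σ i0)).filter (fun v => c (σ.symm v) = c i0)).card : ℚ) / (p:ℚ) := rfl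
      rw [this, mul_div_cancel₀ _ (ne_of_gt hp0)]
      have := hmono_i
      push_cast [← this]
      ring
    have hbe_eq : (q:ℚ) * be = (q:ℚ) - x := by
      have : be = (((G.neighborFinset (σ j0)).filter (fun v => c (σ.symm v) = c j0)).card : ℚ) / (q:ℚ) := rfl
      rw [this, mul_div_cancel₀ _ (ne_of_gt hq0)]
      have := hmono_j
      push_cast [← this]
      ring
    -- memberships
    have hi0OA : i0 ∈ OA := Finset.mem_filter.mpr ⟨hi0O, hadj.symm⟩
    have hj0BA : j0 ∈ BA := Finset.mem_filter.mpr ⟨hj0B, hadj⟩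
    have hx1 : 1 ≤ x := Finset.card_pos.mpr ⟨i0, hi0OA⟩
    have ha1 : 1 ≤ a := Finset.card_pos.mpr ⟨j0, hj0BA⟩
    have hxo : x ≤ o := hoO ▸ Finset.card_le_card (Finset.filter_subset _ O)
    have hab : a ≤ B.card := Finset.card_le_card (Finset.filter_subset _ B)
    have hxq : x ≤ q := by omega
    have hap : a ≤ p := by omega
    -- sum lower bounds
    set ON : Finset A := O.filter (fun i => ¬ G.Adj (σ j0) (σ i)) with hONdef
    set BN : Finset A := B.filter (fun j => ¬ G.Adj (σ i0) (σ j)) with hBNdef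
    have hOsum : (∑ i ∈ O, u i) = (∑ i ∈ OA, u i) + ∑ i ∈ ON, u i :=
      (Finset.sum_filter_add_sum_filter_not O _ u).symm
    have hBsum : (∑ i ∈ B, u i) = (∑ i ∈ BA, u i) + ∑ i ∈ BN, u i :=
      (Finset.sum_filter_add_sum_filter_not B _ u).symm
    have hONcard : x + ON.card = o := by
      rw [hxdef, hONdef, hOAdef, ← hoO]
      exact Finset.card_filter_add_card_filter_not (s := O) (p := fun i => G.Adj (σ j0) (σ i))
    have hBNcard : a + BN.card = B.card := by
      rw [hadef, hBNdef, hBAdef]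
      exact Finset.card_filter_add_card_filter_not (s := B) (p := fun j => G.Adj (σ i0) (σ j))
    have hOAsum : (x:ℚ) * al ≤ ∑ i ∈ OA, u i := by
      simpa [nsmul_eq_mul] using
        Finset.card_nsmul_le_sum OA u al (fun i hi => hi0min i (Finset.mem_filter.mp hi).1)
    have hBAsum : (a:ℚ) * be ≤ ∑ i ∈ BA, u i := by
      simpa [nsmul_eq_mul] using
        Finset.card_nsmul_le_sum BA u be (fun i hi => hj0min i (Finset.mem_filter.mp hi).1)
    have hONsum : (ON.card : ℚ) * (1 - be) ≤ ∑ i ∈ ON, u i := by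
      have hbound : ∀ i ∈ ON, 1 - be ≤ u i := by
        intro i hi
        obtain ⟨hiO, hinadj⟩ := Finset.mem_filter.mp hi
        have := ssg_nonadj_sum G c σ heq i j0 (hOc i hiO) (hdeg _) (hdeg _)
          (fun h => hinadj h.symm)
        linarith
      simpa [nsmul_eq_mul] using Finset.card_nsmul_le_sum ON u (1 - be) hbound
    have hBNsum : (BN.card : ℚ) * (1 - al) ≤ ∑ j ∈ BN, u j := by
      have hbound : ∀ j ∈ BN, 1 - al ≤ u j := by
        intro j hj
        obtain ⟨hjB, hjnadj⟩ := Finset.mem_filter.mp hj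
        have := ssg_nonadj_sum G c σ heq i0 j (hBc j hjB) (hdeg _) (hdeg _) hjnadj
        linarith
      simpa [nsmul_eq_mul] using Finset.card_nsmul_le_sum BN u (1 - al) hbound
    -- equilibrium constraint for the adjacent pair
    have hC0 := ssg_adj_sum G c σ heq i0 j0 hij0 hadj
    have hC : (q:ℚ) * a + (p:ℚ) * x ≤ (p:ℚ) * (q:ℚ) + (p:ℚ) ∨
        (q:ℚ) * a + (p:ℚ) * x ≤ (p:ℚ) * (q:ℚ) + (q:ℚ) := by
      have e1 : (p:ℚ) * ((q:ℚ) * (al + be)) = (q:ℚ) * ((p:ℚ) * al) + (p:ℚ) * ((q:ℚ) * be) := by ring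
      rcases hC0 with h | h
      · left
        have h' : (q:ℚ) - 1 ≤ (q:ℚ) * (al + be) := by
          have := mul_le_mul_of_nonneg_left h hq0.le
          have hq' : (q:ℚ) * (1 - 1/(q:ℚ)) = (q:ℚ) - 1 := by field_simp
          linarith
        have := mul_le_mul_of_nonneg_left h' hp0.le
        rw [e1, hal_eq, hbe_eq] at this
        nlinarith [this]
      · right
        have h' : (p:ℚ) - 1 ≤ (p:ℚ) * (al + be) := by
          have := mul_le_mul_of_nonneg_left h hp0.le
          have hp' : (p:ℚ) * (1 - 1/(p:ℚ)) = (p:ℚ) - 1 := by field_simp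
          linarith
        have := mul_le_mul_of_nonneg_left h' hq0.le
        have e2 : (q:ℚ) * ((p:ℚ) * (al + be)) = (q:ℚ) * ((p:ℚ) * al) + (p:ℚ) * ((q:ℚ) * be) := by ring
        rw [e2, hal_eq, hbe_eq] at this
        nlinarith [this]
    -- apply the arithmetic lemma
    have harith := ssg_arith (o:ℚ) (B.card:ℚ) (p:ℚ) (q:ℚ) (a:ℚ) (x:ℚ) al be
      (by exact_mod_cast hob) (by exact_mod_cast hp1) (by exact_mod_cast hq1)
      (by exact_mod_cast ha1) (by exact_mod_cast hab) (by exact_mod_cast hx1)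
      (by exact_mod_cast hxo) (by exact_mod_cast hxq) (by exact_mod_cast hap)
      hal_eq hbe_eq hs hC
    have hONq : (ON.card : ℚ) = (o:ℚ) - (x:ℚ) := by
      have : (x:ℚ) + (ON.card:ℚ) = (o:ℚ) := by exact_mod_cast hONcard
      linarith
    have hBNq : (BN.card : ℚ) = (B.card:ℚ) - (a:ℚ) := by
      have : (a:ℚ) + (BN.card:ℚ) = (B.card:ℚ) := by exact_mod_cast hBNcard
      linarith
    rw [hwelf, hOsum, hBsum]
    rw [hONq] at hONsum
    rw [hBNq] at hBNsum
    linarith [hOAsum, hBAsum, hONsum, hBNsum, harith]
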